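/- Let A_G be the adjacency matrix of a d-regular graph G on vertex set V_G with λ(G) ≤ Λ, extended by zeros to a larger vertex set V. Let g be a unit vector on V with Σ_{v∈V} g_v = 0 and |Σ_{v∈V_G} g_v| ≤ s. Then |gᵀ A_G g| ≤ Λ·Σ_{v∈V_G} g_v² + d·s²/n, where n = |V_G|. -/

import Mathlib

/-- Let `A` be the adjacency matrix of a `d`-regular graph on vertex set `VG`
with `λ(G) ≤ Λ` (expressed via the Rayleigh quotient over vectors supported
on `VG` orthogonal to the all-ones vector), extended by zeros to a larger
vertex set `V`.  If `g` is a unit vector on `V` with `Σ_v g_v = 0` and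
`|Σ_{v ∈ VG} g_v| ≤ s`, then
`|gᵀ A g| ≤ Λ Σ_{v ∈ VG} g_v² + d s² / n` where `n = |VG|`. -/
theorem stmt12 {V : Type*} [Fintype V] [DecidableEq V]
    (VG : Finset V) (A : Matrix V V ℝ) (d : ℕ) (Λ s : ℝ) (hd : 3 ≤ d)
    (hsymm : A.IsSymm)
    (h01 : ∀ u v, A u v = 0 ∨ A u v = 1)
    (hzero : ∀ u v, (u ∉ VG ∨ v ∉ VG) → A u v = 0)
    (hreg : ∀ v ∈ VG, ∑ u, A v u = d)
    (hlam : ∀ f : V → ℝ, (∑ v ∈ VG, f v) = 0 → (∀ v, v ∉ VG → f v = 0) →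
      |dotProduct f (A.mulVec f)| ≤ Λ * ∑ v ∈ VG, (f v) ^ 2)
    (g : V → ℝ) (hunit : ∑ v, (g v) ^ 2 = 1) (hg0 : ∑ v, g v = 0)
    (hs : |∑ v ∈ VG, g v| ≤ s) :
    |dotProduct g (A.mulVec g)| ≤ Λ * (∑ v ∈ VG, (g v) ^ 2) + d * s ^ 2 / VG.card := by
  classical
  by_cases hVG : VG.Nonempty
  swap
  · rw [Finset.not_nonempty_iff_eq_empty] at hVG
    subst hVG
    have hA : ∀ u v, A u v = 0 := fun u v => hzero u v (Or.inl (by simp))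
    simp [dotProduct, Matrix.mulVec, hA]
  obtain ⟨v₀, hv₀⟩ := hVG
  have hncard : 0 < VG.card := Finset.card_pos.mpr ⟨v₀, hv₀⟩
  have hnpos : (0:ℝ) < VG.card := by exact_mod_cast hncard
  set n : ℝ := (VG.card : ℝ) with hn
  -- row sums over VG
  have hrow : ∀ u ∈ VG, ∑ v ∈ VG, A u v = d := by
    intro u hu
    rw [← hreg u hu]
    exact Finset.sum_subset (Finset.subset_univ _)
      (fun x _ hx => hzero u x (Or.inr hx))
  -- entries ≤ 1 so d ≤ n
  have hdn : (d:ℝ) ≤ n := by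
    rw [← hrow v₀ hv₀]
    calc ∑ v ∈ VG, A v₀ v ≤ ∑ v ∈ VG, 1 := by
          apply Finset.sum_le_sum
          intro i _
          rcases h01 v₀ i with h | h <;> rw [h] <;> norm_num
      _ = n := by simp [hn]
  -- Λ ≥ 0
  have h2 : 1 < VG.card := by
    have : (3:ℝ) ≤ n := le_trans (by exact_mod_cast hd) hdn
    rw [hn] at this
    have : (3:ℕ) ≤ VG.card := by exact_mod_cast this
    omega
  have hΛ : 0 ≤ Λ := by
    obtain ⟨v, hv, w, hw, hvw⟩ := Finset.one_lt_card.mp h2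
    set f₀ : V → ℝ := fun x => (if x = v then 1 else 0) - (if x = w then 1 else 0) with hf₀
    have hsum0 : ∑ x ∈ VG, f₀ x = 0 := by
      simp [hf₀, Finset.sum_sub_distrib, Finset.sum_ite_eq', hv, hw]
    have hout : ∀ x, x ∉ VG → f₀ x = 0 := by
      intro x hx
      have hxv : x ≠ v := fun h => hx (h ▸ hv)
      have hxw : x ≠ w := fun h => hx (h ▸ hw)
      simp [hf₀, hxv, hxw]
    have := hlam f₀ hsum0 hout
    have hsq : ∑ x ∈ VG, f₀ x ^ 2 = 2 := by
      have : ∀ x ∈ VG, f₀ x ^ 2 = (if x = v then 1 else 0) + (if x = w then 1 else 0) := by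
        intro x _
        by_cases hxv : x = v
        · subst hxv
          simp [hf₀, hvw]
        · by_cases hxw : x = w
          · subst hxw
            simp [hf₀, hxv]
          · simp [hf₀, hxv, hxw]
      rw [Finset.sum_congr rfl this]
      simp [Finset.sum_add_distrib, Finset.sum_ite_eq', hv, hw]
      norm_num
    rw [hsq] at this
    nlinarith [abs_nonneg (dotProduct f₀ (A.mulVec f₀))]
  -- decomposition
  set S : ℝ := ∑ v ∈ VG, g v with hSdef
  set a : ℝ := S / n with ha
  have hS : S = n * a := by rw [ha]; field_simp
  set χ : V → ℝ := fun x => if x ∈ VG then 1 else 0 with hχ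
  set f : V → ℝ := fun x => if x ∈ VG then g x - a else 0 with hf
  have hfout : ∀ x, x ∉ VG → f x = 0 := fun x hx => if_neg hx
  have hfsum : ∑ v ∈ VG, f v = 0 := by
    have : ∑ v ∈ VG, f v = ∑ v ∈ VG, (g v - a) :=
      Finset.sum_congr rfl fun x hx => if_pos hx
    rw [this, Finset.sum_sub_distrib, Finset.sum_const, ← hSdef, nsmul_eq_mul, hS, hn]
    ring
  -- A χ = d χ
  have hAχ : A.mulVec χ = fun u => (d:ℝ) * χ u := by
    funext u
    show ∑ v, A u v * χ v = (d:ℝ) * χ u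
    have hre : ∑ v, A u v * χ v = ∑ v ∈ VG, A u v := by
      rw [← Finset.sum_subset (Finset.subset_univ VG)
        (fun x _ hx => by simp [hχ, hx])]
      exact Finset.sum_congr rfl fun x hx => by simp [hχ, hx]
    rw [hre]
    by_cases hu : u ∈ VG
    · rw [hrow u hu]
      simp [hχ, hu]
    · rw [Finset.sum_eq_zero fun x _ => hzero u x (Or.inl hu)]
      simp [hχ, hu]
  have hfχ : dotProduct f (A.mulVec χ) = 0 := by
    rw [hAχ]
    show ∑ u, f u * ((d:ℝ) * χ u) = 0
    have : ∑ u, f u * ((d:ℝ) * χ u) = ∑ u ∈ VG, (d:ℝ) * f u := by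
      rw [← Finset.sum_subset (Finset.subset_univ VG)
        (fun x _ hx => by simp [hfout x hx])]
      exact Finset.sum_congr rfl fun x hx => by simp [hχ, hx]; ring
    rw [this, ← Finset.mul_sum, hfsum, mul_zero]
  have hχf : dotProduct χ (A.mulVec f) = 0 := by
    rw [Matrix.dotProduct_mulVec, ← Matrix.mulVec_transpose, hsymm.eq, hAχ]
    show ∑ u, (d:ℝ) * χ u * f u = 0
    have : ∑ u, (d:ℝ) * χ u * f u = ∑ u ∈ VG, (d:ℝ) * f u := by
      rw [← Finset.sum_subset (Finset.subset_univ VG)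
        (fun x _ hx => by simp [hfout x hx])]
      exact Finset.sum_congr rfl fun x hx => by simp [hχ, hx]
    rw [this, ← Finset.mul_sum, hfsum, mul_zero]
  have hχχ : dotProduct χ (A.mulVec χ) = d * n := by
    rw [hAχ]
    show ∑ u, χ u * ((d:ℝ) * χ u) = d * n
    have : ∑ u, χ u * ((d:ℝ) * χ u) = ∑ u ∈ VG, (d:ℝ) := by
      rw [← Finset.sum_subset (Finset.subset_univ VG)
        (fun x _ hx => by simp [hχ, hx])]
      exact Finset.sum_congr rfl fun x hx => by simp [hχ, hx]
    rw [this, Finset.sum_const, nsmul_eq_mul, hn]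
    ring
  -- g ↦ h = f + a • χ
  have hgh : dotProduct g (A.mulVec g)
      = dotProduct (f + a • χ) (A.mulVec (f + a • χ)) := by
    show ∑ u, g u * ∑ v, A u v * g v
        = ∑ u, (f + a • χ) u * ∑ v, A u v * (f + a • χ) v
    have key : ∀ u v, g u * (A u v * g v) = (f + a • χ) u * (A u v * (f + a • χ) v) := by
      intro u v
      by_cases hu : u ∈ VG
      · by_cases hv : v ∈ VG
        · simp only [Pi.add_apply, Pi.smul_apply, smul_eq_mul, hf, hχ, if_pos hu, if_pos hv]
          ring
        · rw [hzero u v (Or.inr hv)]; ring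
      · rw [hzero u v (Or.inl hu)]; ring
    calc ∑ u, g u * ∑ v, A u v * g v
        = ∑ u, ∑ v, g u * (A u v * g v) := by
          exact Finset.sum_congr rfl fun u _ => Finset.mul_sum _ _ _
      _ = ∑ u, ∑ v, (f + a • χ) u * (A u v * (f + a • χ) v) :=
          Finset.sum_congr rfl fun u _ => Finset.sum_congr rfl fun v _ => key u v
      _ = ∑ u, (f + a • χ) u * ∑ v, A u v * (f + a • χ) v := by
          exact Finset.sum_congr rfl fun u _ => (Finset.mul_sum _ _ _).symm
  have hexp : dotProduct g (A.mulVec g)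
      = dotProduct f (A.mulVec f) + a ^ 2 * (d * n) := by
    rw [hgh, Matrix.mulVec_add, Matrix.mulVec_smul, add_dotProduct,
      smul_dotProduct, dotProduct_add, dotProduct_add,
      dotProduct_smul, dotProduct_smul, hfχ, hχf, hχχ,
      smul_eq_mul, smul_eq_mul, smul_eq_mul]
    ring
  -- sums of squares
  have hfsq : ∑ v ∈ VG, f v ^ 2 = (∑ v ∈ VG, g v ^ 2) - n * a ^ 2 := by
    have h1 : ∑ v ∈ VG, f v ^ 2 = ∑ v ∈ VG, (g v ^ 2 - 2 * a * g v + a ^ 2) :=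
      Finset.sum_congr rfl fun x hx => by rw [hf]; simp only [if_pos hx]; ring
    rw [h1, Finset.sum_add_distrib, Finset.sum_sub_distrib, ← Finset.mul_sum,
      ← hSdef, Finset.sum_const, nsmul_eq_mul, ← hn, hS]
    ring
  have hSs : S ^ 2 ≤ s ^ 2 := by
    have hs0 : 0 ≤ s := le_trans (abs_nonneg _) hs
    calc S ^ 2 = |S| ^ 2 := (sq_abs S).symm
      _ ≤ s ^ 2 := by nlinarith [abs_nonneg S]
  have hlamf := hlam f hfsum hfout
  rw [hfsq] at hlamf
  have hbound : a ^ 2 * (d * n) ≤ (d:ℝ) * s ^ 2 / n := by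
    have : a ^ 2 * (d * n) = (d:ℝ) * S ^ 2 / n := by
      rw [ha]; field_simp
    rw [this]
    exact div_le_div_of_nonneg_right (mul_le_mul_of_nonneg_left hSs (Nat.cast_nonneg d)) hnpos.le
  calc |dotProduct g (A.mulVec g)|
      ≤ |dotProduct f (A.mulVec f)| + a ^ 2 * (d * n) := by
        rw [hexp]
        refine le_trans (abs_add_le _ _) ?_
        have : |a ^ 2 * (d * n)| = a ^ 2 * (d * n) := by
          apply abs_of_nonneg; exact mul_nonneg (sq_nonneg a) (mul_nonneg (Nat.cast_nonneg d) hnpos.le)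
        rw [this]
    _ ≤ Λ * ((∑ v ∈ VG, g v ^ 2) - n * a ^ 2) + a ^ 2 * (d * n) := by linarith
    _ ≤ Λ * (∑ v ∈ VG, g v ^ 2) + (d:ℝ) * s ^ 2 / n := by
        have h1 : Λ * ((∑ v ∈ VG, g v ^ 2) - n * a ^ 2) ≤ Λ * (∑ v ∈ VG, g v ^ 2) := by
          apply mul_le_mul_of_nonneg_left _ hΛ
          nlinarith
        linarith
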